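/- Let c > 0, T > 0, and let U : [0, T) → ℝ be a differentiable function such that U'(t) ≤ 4 U(t)^2 + 4c for all t ∈ [0, T), and such that lim sup_{t → T⁻} U(t) = +∞. Then for every t ∈ [0, T) with 0 < T − t < π/(16√c), one has U(t) ≥ 1/(4√2 (T − t)). -/

import Mathlib

open Real Set Filter

/-- Lemma 6.1 (ODE part): if `U' ≤ 4 U² + 4c` on `[0, T)` and
`limsup_{t → T⁻} U(t) = +∞`, then `U(t) ≥ 1 / (4 √2 (T - t))`
whenever `0 < T - t < π / (16 √c)`. -/
theorem blowup_lower_bound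
    (c T : ℝ) (hc : 0 < c) (hT : 0 < T)
    (U U' : ℝ → ℝ)
    (hderiv : ∀ t ∈ Ico (0 : ℝ) T, HasDerivAt U (U' t) t)
    (hineq : ∀ t ∈ Ico (0 : ℝ) T, U' t ≤ 4 * (U t) ^ 2 + 4 * c)
    (hblow : Filter.limsup (fun t => (U t : EReal)) (nhdsWithin T (Iio T)) = ⊤) :
    ∀ t ∈ Ico (0 : ℝ) T, 0 < T - t → T - t < π / (16 * Real.sqrt c) →
      U t ≥ 1 / (4 * Real.sqrt 2 * (T - t)) := by
  set a : ℝ := Real.sqrt c with ha_def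
  have ha : 0 < a := Real.sqrt_pos.mpr hc
  have ha2 : a ^ 2 = c := Real.sq_sqrt hc.le
  -- the comparison function
  set f : ℝ → ℝ := fun s => Real.arctan (U s / a) - 4 * a * s with hf_def
  -- f has nonpositive derivative on Ico 0 T
  have hfderiv : ∀ s ∈ Ico (0 : ℝ) T,
      HasDerivAt f (1 / (1 + (U s / a) ^ 2) * (U' s / a) - 4 * a) s := by
    intro s hs
    have h := ((Real.hasDerivAt_arctan (U s / a)).comp s
      ((hderiv s hs).div_const a)).sub (((hasDerivAt_id s).const_mul (4 * a)))
    simpa [hf_def, Function.comp_def, Pi.sub_def] using h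
  have hfderiv_nonpos : ∀ s ∈ Ico (0 : ℝ) T,
      1 / (1 + (U s / a) ^ 2) * (U' s / a) - 4 * a ≤ 0 := by
    intro s hs
    have h1 : U' s ≤ 4 * (U s) ^ 2 + 4 * c := hineq s hs
    have hd : (0:ℝ) < a ^ 2 + (U s) ^ 2 := by positivity
    have key : 1 / (1 + (U s / a) ^ 2) * (U' s / a) ≤ 4 * a := by
      have e1 : 1 + (U s / a) ^ 2 = (a ^ 2 + (U s) ^ 2) / a ^ 2 := by
        field_simp
      rw [e1, one_div, inv_div, div_mul_div_comm, div_le_iff₀ (by positivity)]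
      nlinarith [sq_nonneg (U s), ha.le, mul_pos ha hd]
    linarith
  -- f is antitone on Ico 0 T
  have hanti : AntitoneOn f (Ico (0 : ℝ) T) := by
    apply antitoneOn_of_deriv_nonpos (convex_Ico 0 T)
    · intro s hs
      exact ((hfderiv s hs).continuousAt).continuousWithinAt
    · intro s hs
      rw [interior_Ico] at hs
      exact ((hfderiv s ⟨hs.1.le, hs.2⟩).differentiableAt).differentiableWithinAt
    · intro s hs
      rw [interior_Ico] at hs
      have hs' : s ∈ Ico (0:ℝ) T := ⟨hs.1.le, hs.2⟩
      rw [(hfderiv s hs').deriv]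
      exact hfderiv_nonpos s hs'
  -- unboundedness: for every M there are s arbitrarily close to T with M < U s
  have hfreq : ∀ M : ℝ, ∃ᶠ s in nhdsWithin T (Iio T), M < U s := by
    intro M
    by_contra h
    rw [Filter.not_frequently] at h
    have h' : ∀ᶠ s in nhdsWithin T (Iio T), (U s : EReal) ≤ (M : EReal) := by
      filter_upwards [h] with s hs
      exact_mod_cast not_lt.mp hs
    have hle : Filter.limsup (fun t => (U t : EReal)) (nhdsWithin T (Iio T)) ≤ (M : EReal) :=
      Filter.limsup_le_of_le (by isBoundedDefault) h'
    rw [hblow] at hle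
    exact absurd hle (not_le.mpr (EReal.coe_lt_top M))
  intro t ht htT hxx
  set x : ℝ := 4 * a * (T - t) with hx_def
  have hx0 : 0 < x := by positivity
  have hx4 : x < π / 4 := by
    have h16 : (T - t) * (16 * a) < π := (lt_div_iff₀ (by positivity)).mp hxx
    rw [hx_def]; nlinarith
  have hpi : (0:ℝ) < π := Real.pi_pos
  -- key step: arctan (U t / a) ≥ π/2 - x
  have key : π / 2 - x ≤ Real.arctan (U t / a) := by
    by_contra hcon
    push_neg at hcon
    set ε : ℝ := π / 2 - x - Real.arctan (U t / a) with hε_def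
    have hε0 : 0 < ε := by rw [hε_def]; linarith
    have hεπ : ε < π := by
      have := Real.neg_pi_div_two_lt_arctan (U t / a)
      rw [hε_def]; linarith
    set θ : ℝ := π / 2 - ε with hθ_def
    have hθ1 : -(π / 2) < θ := by rw [hθ_def]; linarith
    have hθ2 : θ < π / 2 := by rw [hθ_def]; linarith
    -- pick s ∈ (t, T) with U s > a * tan θ
    have hev : ∀ᶠ s in nhdsWithin T (Iio T), t < s ∧ s < T := by
      have h1 : ∀ᶠ s in nhdsWithin T (Iio T), t < s :=
        Filter.Eventually.filter_mono nhdsWithin_le_nhds (eventually_gt_nhds (sub_pos.mp htT))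
      have h2 : ∀ᶠ s in nhdsWithin T (Iio T), s < T := self_mem_nhdsWithin
      filter_upwards [h1, h2] with s hs1 hs2 using ⟨hs1, hs2⟩
    obtain ⟨s, hMs, hts, hsT⟩ :=
      ((hfreq (a * Real.tan θ)).and_eventually hev).exists
    have hs : s ∈ Ico (0:ℝ) T := ⟨le_trans ht.1 hts.le, hsT⟩
    -- from monotonicity of f
    have hfs : f s ≤ f t := hanti ht hs hts.le
    have harc_s : Real.arctan (U s / a) ≤ Real.arctan (U t / a) + 4 * a * (s - t) := by
      simp only [hf_def] at hfs
      linarith [hfs]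
    -- but U s / a > tan θ forces arctan (U s / a) > θ
    have hgt : θ < Real.arctan (U s / a) := by
      calc θ = Real.arctan (Real.tan θ) := (Real.arctan_tan hθ1 hθ2).symm
        _ < Real.arctan (U s / a) := by
            apply Real.arctan_strictMono
            rw [lt_div_iff₀ ha]
            linarith [hMs]
    have h4a : 4 * a * (s - t) ≤ x := by
      rw [hx_def]
      have : s - t ≤ T - t := by linarith
      nlinarith [ha]
    rw [hθ_def, hε_def] at hgt
    linarith
  -- conclude via monotonicity of tan
  have harct_lt : Real.arctan (U t / a) < π / 2 := Real.arctan_lt_pi_div_two _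
  have harct_gt : -(π / 2) < Real.arctan (U t / a) := Real.neg_pi_div_two_lt_arctan _
  have htan : Real.tan (π / 2 - x) ≤ U t / a := by
    have h1 : (π / 2 - x) ∈ Ioo (-(π/2)) (π/2) := by constructor <;> [linarith; linarith]
    have h2 : Real.arctan (U t / a) ∈ Ioo (-(π/2)) (π/2) := ⟨harct_gt, harct_lt⟩
    calc Real.tan (π / 2 - x) ≤ Real.tan (Real.arctan (U t / a)) :=
          Real.strictMonoOn_tan.monotoneOn h1 h2 key
      _ = U t / a := Real.tan_arctan _
  rw [Real.tan_pi_div_two_sub] at htan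
  -- tan x ≤ √2 * x
  have hcosx : Real.sqrt 2 / 2 ≤ Real.cos x := by
    rw [← Real.cos_pi_div_four]
    exact Real.cos_le_cos_of_nonneg_of_le_pi hx0.le (by linarith) hx4.le
  have hcosx_pos : 0 < Real.cos x := lt_of_lt_of_le (by positivity) hcosx
  have hsinx : Real.sin x ≤ x := Real.sin_le hx0.le
  have hsqrt2 : (0:ℝ) < Real.sqrt 2 := by positivity
  have hsq2 : Real.sqrt 2 ^ 2 = 2 := Real.sq_sqrt (by norm_num)
  have htanx_pos : 0 < Real.tan x := Real.tan_pos_of_pos_of_lt_pi_div_two hx0 (by linarith)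
  have htanx_le : Real.tan x ≤ Real.sqrt 2 * x := by
    rw [Real.tan_eq_sin_div_cos]
    calc Real.sin x / Real.cos x ≤ x / (Real.sqrt 2 / 2) :=
          div_le_div₀ hx0.le hsinx (by positivity) hcosx
      _ = Real.sqrt 2 * x := by
          rw [div_div_eq_mul_div, div_eq_iff hsqrt2.ne']
          nlinarith [hsq2]
  -- combine
  have h1 : (Real.sqrt 2 * x)⁻¹ ≤ (Real.tan x)⁻¹ :=
    inv_anti₀ htanx_pos htanx_le
  have h2 : (Real.sqrt 2 * x)⁻¹ ≤ U t / a := le_trans h1 htan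
  have h3 : a * (Real.sqrt 2 * x)⁻¹ ≤ U t := by
    rw [le_div_iff₀ ha] at h2
    calc a * (Real.sqrt 2 * x)⁻¹ = (Real.sqrt 2 * x)⁻¹ * a := mul_comm _ _
      _ ≤ U t := h2
  rw [ge_iff_le]
  calc 1 / (4 * Real.sqrt 2 * (T - t)) = a * (Real.sqrt 2 * x)⁻¹ := by
        rw [hx_def]; field_simp
    _ ≤ U t := h3
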